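/- Suppose 0 ≤ t ≤ 1, ρ is a complex root of x^5 + t x^3 + 1, and μ is a fifth root of unity (μ^5 = 1). Then |ρ − μ| ≥ 1/10. -/

import Mathlib

theorem stmt_15 (t : ℝ) (ht0 : 0 ≤ t) (ht1 : t ≤ 1) (ρ μ : ℂ)
    (hρ : ρ ^ 5 + (t : ℂ) * ρ ^ 3 + 1 = 0) (hμ : μ ^ 5 = 1) :
    1 / 10 ≤ ‖ρ - μ‖ := by
  by_contra h
  push_neg at h
  set a := ‖ρ‖ with ha
  set d := ‖ρ - μ‖ with hd
  have ha0 : 0 ≤ a := norm_nonneg ρ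
  have hd0 : 0 ≤ d := norm_nonneg _
  have hμ5 : ‖μ‖ ^ 5 = 1 := by
    rw [← norm_pow, hμ, norm_one]
  have hμabs : ‖μ‖ = 1 := by
    nlinarith [norm_nonneg μ, sq_nonneg (‖μ‖ - 1),
      sq_nonneg (‖μ‖ + 1), sq_nonneg (‖μ‖ ^ 2 - 1),
      sq_nonneg (‖μ‖ ^ 2 + ‖μ‖)]
  -- |ρ| ≤ |ρ - μ| + |μ|
  have haub : a ≤ d + 1 := by
    calc a = ‖(ρ - μ) + μ‖ := by ring_nf; rfl
    _ ≤ d + ‖μ‖ := norm_add_le _ _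
    _ = d + 1 := by rw [hμabs]
  -- |ρ^5 + 1| = t * a^3
  have heq : ρ ^ 5 + 1 = -((t : ℂ) * ρ ^ 3) := by linear_combination hρ
  have h1 : ‖ρ ^ 5 + 1‖ = t * a ^ 3 := by
    rw [heq, norm_neg, norm_mul, norm_pow, Complex.norm_real, Real.norm_of_nonneg ht0]
  -- |ρ^5 - μ^5| ≤ d * (a^4 + a^3 + a^2 + a + 1)
  have hfac : ρ ^ 5 - μ ^ 5 = (ρ - μ) * (ρ ^ 4 + ρ ^ 3 * μ + ρ ^ 2 * μ ^ 2 + ρ * μ ^ 3 + μ ^ 4) := by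
    ring
  have h2 : ‖ρ ^ 5 - μ ^ 5‖ ≤ d * (a ^ 4 + a ^ 3 + a ^ 2 + a + 1) := by
    rw [hfac, norm_mul]
    refine mul_le_mul_of_nonneg_left ?_ hd0
    calc ‖ρ ^ 4 + ρ ^ 3 * μ + ρ ^ 2 * μ ^ 2 + ρ * μ ^ 3 + μ ^ 4‖
        ≤ ‖ρ ^ 4 + ρ ^ 3 * μ + ρ ^ 2 * μ ^ 2 + ρ * μ ^ 3‖ + ‖μ ^ 4‖ :=
          norm_add_le _ _
      _ ≤ (‖ρ ^ 4 + ρ ^ 3 * μ + ρ ^ 2 * μ ^ 2‖ + ‖ρ * μ ^ 3‖) + ‖μ ^ 4‖ := by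
          gcongr; exact norm_add_le _ _
      _ ≤ ((‖ρ ^ 4 + ρ ^ 3 * μ‖ + ‖ρ ^ 2 * μ ^ 2‖) + ‖ρ * μ ^ 3‖) + ‖μ ^ 4‖ := by
          gcongr; exact norm_add_le _ _
      _ ≤ (((‖ρ ^ 4‖ + ‖ρ ^ 3 * μ‖) + ‖ρ ^ 2 * μ ^ 2‖) + ‖ρ * μ ^ 3‖) + ‖μ ^ 4‖ := by
          gcongr; exact norm_add_le _ _
      _ = a ^ 4 + a ^ 3 + a ^ 2 + a + 1 := by
          simp [norm_mul, norm_pow, hμabs, ha]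
  -- 2 ≤ |ρ^5 + 1| + |ρ^5 - μ^5|
  have h3 : (2 : ℝ) ≤ ‖ρ ^ 5 + 1‖ + ‖ρ ^ 5 - μ ^ 5‖ := by
    have he : (2 : ℂ) = (ρ ^ 5 + 1) - (ρ ^ 5 - μ ^ 5) := by linear_combination -hμ
    calc (2 : ℝ) = ‖(2 : ℂ)‖ := by norm_num
      _ = ‖(ρ ^ 5 + 1) - (ρ ^ 5 - μ ^ 5)‖ := by rw [← he]
      _ ≤ _ := by
          have htri := norm_add_le (ρ ^ 5 + 1) (-(ρ ^ 5 - μ ^ 5))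
          rw [← sub_eq_add_neg, norm_neg] at htri
          exact htri
  have ha11 : a < 1.1 := by linarith
  have hb2 : a ^ 2 < 1.21 := by nlinarith
  have hb3 : a ^ 3 < 1.331 := by nlinarith
  have hb4 : a ^ 4 < 1.4641 := by nlinarith
  have ht3 : t * a ^ 3 ≤ a ^ 3 := by nlinarith
  have hsum : d * (a ^ 4 + a ^ 3 + a ^ 2 + a + 1) ≤ (1/10) * 6.1051 := by nlinarith
  linarith
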